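/- The function W : (ℂ∖{0})² → ℂ defined by W(y_1, y_2) = y_1 + y_2 + y_1^{−1}y_2^{−1} + 2·y_2^{−1} + y_1·y_2^{−1} has exactly 3 critical points, and each of these critical points is nondegenerate. -/

import Mathlib

/-- The potential function of the monotone fiber `L(2,2)` in `X̂₂` without bulk deformation (energy factor dropped). -/
noncomputable def W : ℂ → ℂ → ℂ := fun y₁ y₂ =>
  y₁ + y₂ + y₁⁻¹ * y₂⁻¹ + 2 * y₂⁻¹ + y₁ * y₂⁻¹

/-- A point of `(ℂ∖{0})²` is a critical point of `W` if both partial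
derivatives of `W` vanish there. -/
def IsCritPt (p : ℂ × ℂ) : Prop :=
  p.1 ≠ 0 ∧ p.2 ≠ 0 ∧
    deriv (fun z => W z p.2) p.1 = 0 ∧ deriv (fun z => W p.1 z) p.2 = 0

/-- The Hessian determinant
`(∂²W/∂y₁²)(∂²W/∂y₂²) - (∂²W/∂y₁∂y₂)²` of `W` at a point. -/
noncomputable def hessDet (p : ℂ × ℂ) : ℂ :=
  deriv (deriv (fun z => W z p.2)) p.1 * deriv (deriv (fun z => W p.1 z)) p.2
    - (deriv (fun w => deriv (fun z => W z w) p.1) p.2) ^ 2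

open Polynomial in
/-- The cubic whose roots are the first coordinates of the critical points. -/
noncomputable def critCubic : Polynomial ℂ := X^3 - X^2 + 2*X - 1

section Derivs

lemma hasDeriv1 {a : ℂ} (b : ℂ) (ha : a ≠ 0) :
    HasDerivAt (fun z => W z b) (1 - (a^2)⁻¹ * b⁻¹ + b⁻¹) a := by
  have h := (((hasDerivAt_id a).add_const b).add
      ((hasDerivAt_inv ha).mul_const b⁻¹)).add_const (2*b⁻¹) |>.add
      ((hasDerivAt_id a).mul_const b⁻¹)
  exact h.congr_deriv (by ring)

lemma hasDeriv2 (a : ℂ) {b : ℂ} (hb : b ≠ 0) :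
    HasDerivAt (fun z => W a z) (1 - (a⁻¹ + 2 + a) * (b^2)⁻¹) b := by
  have h := (((hasDerivAt_id b).const_add a).add
      ((hasDerivAt_inv hb).const_mul a⁻¹)).add
      ((hasDerivAt_inv hb).const_mul 2) |>.add
      ((hasDerivAt_inv hb).const_mul a)
  exact h.congr_deriv (by ring)

lemma second11 {a b : ℂ} (ha : a ≠ 0) (hb : b ≠ 0) :
    deriv (deriv (fun z => W z b)) a = -((-(2*a^1)/((a^2)^2)) * b⁻¹) := by
  have ev : deriv (fun z => W z b) =ᶠ[nhds a] fun z => 1 - (z^2)⁻¹ * b⁻¹ + b⁻¹ := by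
    filter_upwards [isOpen_compl_singleton.mem_nhds
      (show a ∈ ({0}ᶜ : Set ℂ) by simpa using ha)] with z hz
    exact (hasDeriv1 b (by simpa using hz)).deriv
  rw [Filter.EventuallyEq.deriv_eq ev]
  exact (((((hasDerivAt_pow 2 a).inv (pow_ne_zero 2 ha)).mul_const b⁻¹).const_sub 1).add_const
    b⁻¹).deriv

lemma second22 {a b : ℂ} (ha : a ≠ 0) (hb : b ≠ 0) :
    deriv (deriv (fun z => W a z)) b
      = -((a⁻¹ + 2 + a) * (-(2*b^1)/((b^2)^2))) := by
  have ev : deriv (fun z => W a z) =ᶠ[nhds b] fun w => 1 - (a⁻¹ + 2 + a) * (w^2)⁻¹ := by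
    filter_upwards [isOpen_compl_singleton.mem_nhds
      (show b ∈ ({0}ᶜ : Set ℂ) by simpa using hb)] with w hw
    exact (hasDeriv2 a (by simpa using hw)).deriv
  rw [Filter.EventuallyEq.deriv_eq ev]
  exact ((((hasDerivAt_pow 2 b).inv (pow_ne_zero 2 hb)).const_mul (a⁻¹+2+a)).const_sub 1).deriv

lemma second12 {a b : ℂ} (ha : a ≠ 0) (hb : b ≠ 0) :
    deriv (fun w => deriv (fun z => W z w) a) b
      = -((a^2)⁻¹ * (-(b^2)⁻¹)) + (-(b^2)⁻¹) := by
  have ev : (fun w => deriv (fun z => W z w) a)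
      =ᶠ[nhds b] fun w => 1 - (a^2)⁻¹ * w⁻¹ + w⁻¹ := by
    filter_upwards [isOpen_compl_singleton.mem_nhds
      (show b ∈ ({0}ᶜ : Set ℂ) by simpa using hb)] with w hw
    exact (hasDeriv1 w ha).deriv
  rw [Filter.EventuallyEq.deriv_eq ev]
  exact ((((hasDerivAt_inv hb).const_mul (a^2)⁻¹).const_sub 1).add (hasDerivAt_inv hb)).deriv

lemma hessDet_val {a b : ℂ} (ha : a ≠ 0) (hb : b ≠ 0) :
    hessDet (a, b) * (a^4 * b^4) = (1+a)^3 * (3-a) := by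
  unfold hessDet
  simp only [second11 ha hb, second22 ha hb, second12 ha hb]
  field_simp
  ring_nf

end Derivs

section Cubic
open Polynomial

lemma critCubic_deriv : derivative critCubic = 3*X^2 - 2*X + 2 := by
  unfold critCubic
  simp only [derivative_sub, derivative_add, derivative_pow, derivative_X, derivative_one,
    derivative_mul, derivative_ofNat]
  ring_nf
  rw [map_ofNat, map_ofNat]
  ring

lemma critCubic_natDegree : critCubic.natDegree = 3 := by unfold critCubic; compute_degree!

lemma critCubic_ne_zero : critCubic ≠ 0 := by
  intro h
  have h' := critCubic_natDegree
  rw [h] at h'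
  simp at h'

lemma critCubic_sep : critCubic.Separable := by
  have key : (-(30*X+1)) * critCubic
      + (10*X^2 - 3*X + 11) * derivative critCubic = 23 := by
    rw [critCubic_deriv]; unfold critCubic; ring
  have h23 : C (23⁻¹ : ℂ) * (23 : ℂ[X]) = 1 := by
    rw [show ((23 : ℂ[X]) = C (23:ℂ)) from (map_ofNat C 23).symm, ← C_mul]
    norm_num
  refine ⟨C (23⁻¹ : ℂ) * (-(30*X+1)), C (23⁻¹ : ℂ) * (10*X^2 - 3*X + 11), ?_⟩
  calc C (23⁻¹ : ℂ) * (-(30*X+1)) * critCubic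
        + C (23⁻¹ : ℂ) * (10*X^2 - 3*X + 11) * derivative critCubic
      = C (23⁻¹ : ℂ) * ((-(30*X+1)) * critCubic
        + (10*X^2 - 3*X + 11) * derivative critCubic) := by ring
    _ = 1 := by rw [key, h23]

lemma critCubic_roots_card : Multiset.card critCubic.roots = 3 := by
  have h := (splits_iff_card_roots.mp (IsAlgClosed.splits (k := ℂ) critCubic))
  rw [h, critCubic_natDegree]

lemma rootSet_eq : {a : ℂ | a^3 - a^2 + 2*a - 1 = 0} = ↑(critCubic.roots.toFinset) := by
  ext x
  simp only [Set.mem_setOf_eq, Multiset.mem_toFinset, Finset.mem_coe,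
    mem_roots critCubic_ne_zero, IsRoot.def]
  unfold critCubic
  simp [sub_eq_zero]

lemma rootSet_ncard : {a : ℂ | a^3 - a^2 + 2*a - 1 = 0}.ncard = 3 := by
  rw [rootSet_eq, Set.ncard_coe_finset,
    Multiset.toFinset_card_of_nodup (nodup_roots critCubic_sep), critCubic_roots_card]

end Cubic

lemma crit_iff (a b : ℂ) :
    IsCritPt (a, b) ↔ (a^3 - a^2 + 2*a - 1 = 0 ∧ b = (a^2)⁻¹ - 1) := by
  constructor
  · rintro ⟨ha, hb, hc1, hc2⟩
    simp only at ha hb hc1 hc2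
    have h1 : 1 - (a^2)⁻¹ * b⁻¹ + b⁻¹ = 0 := by
      rw [← (hasDeriv1 b ha).deriv]; exact hc1
    have h2 : 1 - (a⁻¹ + 2 + a) * (b^2)⁻¹ = 0 := by
      rw [← (hasDeriv2 a hb).deriv]; exact hc2
    have E1 : a^2*b + a^2 = 1 := by
      field_simp at h1
      have h1' : b * (a^2*b + a^2 - 1) = 0 := by linear_combination b*h1
      have h1'' := (mul_eq_zero.mp h1').resolve_left hb
      linear_combination h1''
    have E2 : a*b^2 = (1+a)^2 := by
      field_simp at h2; linear_combination h2
    have ha1 : a + 1 ≠ 0 := by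
      intro h
      have hae : a = -1 := by linear_combination h
      apply hb
      rw [hae] at E1
      linear_combination E1
    have hcube : a^3 = (1-a)^2 := by
      have key : a^3*(a+1)^2 = (1-a)^2*(a+1)^2 := by
        linear_combination (-(a^3))*E2 + (a^2*b + 1 - a^2)*E1
      exact mul_right_cancel₀ (pow_ne_zero 2 ha1) key
    refine ⟨by linear_combination hcube, ?_⟩
    field_simp
    linear_combination E1
  · rintro ⟨hr, hbdef⟩
    have ha : a ≠ 0 := by
      intro h; rw [h] at hr; norm_num at hr
    have ha2 : a^2 ≠ 1 := by
      intro h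
      have h12 : (a - 1) * (a + 1) = 0 := by linear_combination h
      rcases mul_eq_zero.mp h12 with h' | h'
      · have h1 : a = 1 := by linear_combination h'
        rw [h1] at hr; norm_num at hr
      · have h1 : a = -1 := by linear_combination h'
        rw [h1] at hr; norm_num at hr
    have hb : b ≠ 0 := by
      rw [hbdef]
      intro h
      apply ha2
      have h1 : (a^2)⁻¹ = 1 := by linear_combination h
      rwa [inv_eq_one] at h1
    have E1 : a^2*b + a^2 = 1 := by
      rw [hbdef]; field_simp; ring
    have hcube : a^3 = (1-a)^2 := by linear_combination hr
    have E2 : a*b^2 = (1+a)^2 := by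
      have key : a^3*(a*b^2) = a^3*(1+a)^2 := by
        linear_combination (a^2*b + 1 - a^2)*E1 - (1+a)^2*hcube
      exact mul_left_cancel₀ (pow_ne_zero 3 ha) key
    refine ⟨ha, hb, ?_, ?_⟩
    · rw [(hasDeriv1 b ha).deriv]
      field_simp
      first
      | linear_combination E1
      | linear_combination b*E1
      | linear_combination (b-1)*E1
      | linear_combination (b+1)*E1
    · rw [(hasDeriv2 a hb).deriv]
      field_simp
      first
      | linear_combination E2
      | linear_combination a*E2
      | linear_combination b*E2
      | linear_combination (a*b)*E2

lemma critSet_eq :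
    {p : ℂ × ℂ | IsCritPt p}
      = (fun a : ℂ => (a, (a^2)⁻¹ - 1)) '' {a : ℂ | a^3 - a^2 + 2*a - 1 = 0} := by
  ext ⟨a, b⟩
  simp only [Set.mem_setOf_eq, Set.mem_image]
  rw [crit_iff]
  constructor
  · rintro ⟨h1, h2⟩
    exact ⟨a, h1, by rw [← h2]⟩
  · rintro ⟨x, hx, heq⟩
    obtain ⟨h1, h2⟩ := Prod.mk.injEq .. ▸ heq
    subst h1
    exact ⟨hx, h2.symm⟩

/-- `W` has exactly 3 critical points in `(ℂ∖{0})²`, and each of them is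
nondegenerate (nonvanishing Hessian determinant). -/
theorem W_critical_points :
    {p : ℂ × ℂ | IsCritPt p}.ncard = 3 ∧
      ∀ p : ℂ × ℂ, IsCritPt p → hessDet p ≠ 0 := by
  constructor
  · rw [critSet_eq,
      Set.ncard_image_of_injective _ (fun x y h => congrArg Prod.fst h), rootSet_ncard]
  · rintro ⟨a, b⟩ hp
    obtain ⟨hr, hbdef⟩ := (crit_iff a b).mp hp
    obtain ⟨ha, hb, -, -⟩ := hp
    simp only at ha hb
    have ha1 : 1 + a ≠ 0 := by
      intro h
      have hae : a = -1 := by linear_combination h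
      rw [hae] at hr; norm_num at hr
    have ha3 : 3 - a ≠ 0 := by
      intro h
      have hae : a = 3 := by linear_combination -h
      rw [hae] at hr; norm_num at hr
    intro h0
    have hv := hessDet_val ha hb
    rw [h0, zero_mul] at hv
    exact (mul_ne_zero (pow_ne_zero 3 ha1) ha3) hv.symm
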